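/- arXiv:2004.07214 — 2 statements merged into one kernel-verified Lean document; each statement's English description precedes it below -/
import Mathlib

section
/- Let G be a finite graph and D a minimal dominating set of G such that the induced subgraph G[D] contains at least one edge. Then there exists a minimal dominating set D* of G such that the edge set of G[D*] is a proper subset of the edge set of G[D] and some vertex of D* is isolated in G[D*]. -/
open Set

/-- The closed neighborhood `N[v]` of a vertex. -/
def closedNbhd {V : Type*} (G : SimpleGraph V) (v : V) : Set V :=
  insert v (G.neighborSet v)

/-- The closed neighborhood `N[S]` of a set of vertices. -/
def closedNbhdSet {V : Type*} (G : SimpleGraph V) (S : Set V) : Set V :=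
  ⋃ v ∈ S, closedNbhd G v

/-- `D` is a dominating set of `G`. -/
def IsDomSet {V : Type*} (G : SimpleGraph V) (D : Set V) : Prop :=
  ∀ w, w ∈ closedNbhdSet G D

/-- `D` is a minimal dominating set of `G`. -/
def IsMinDomSet {V : Type*} (G : SimpleGraph V) (D : Set V) : Prop :=
  IsDomSet G D ∧ ∀ D' ⊂ D, ¬ IsDomSet G D'

/-- The set `priv(D, u)` of private neighbors of `u` with respect to `D`:
vertices `v` with `N[v] ∩ D = {u}`. -/
def privSet {V : Type*} (G : SimpleGraph V) (D : Set V) (u : V) : Set V :=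
  {v | closedNbhd G v ∩ D = {u}}

/-- `X` is a maximal independent set of the subgraph of `G` induced by `S`. -/
def IsMaxIndepOn {V : Type*} (G : SimpleGraph V) (S X : Set V) : Prop :=
  X ⊆ S ∧ (∀ x ∈ X, ∀ y ∈ X, ¬ G.Adj x y) ∧
    ∀ X' ⊆ S, (∀ x ∈ X', ∀ y ∈ X', ¬ G.Adj x y) → X ⊆ X' → X' = X

/-- The edge set of the subgraph of `G` induced by `S`. -/
def edgesIn {V : Type*} (G : SimpleGraph V) (S : Set V) : Set (Sym2 V) :=
  {e ∈ G.edgeSet | ∀ x ∈ e, x ∈ S}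

lemma mem_cn {V : Type*} (G : SimpleGraph V) {v w : V} :
    w ∈ closedNbhd G v ↔ w = v ∨ G.Adj v w := by
  simp [closedNbhd]

lemma cn_symm {V : Type*} (G : SimpleGraph V) {v w : V} :
    w ∈ closedNbhd G v ↔ v ∈ closedNbhd G w := by
  rw [mem_cn, mem_cn, G.adj_comm, eq_comm]

lemma dom_iff {V : Type*} (G : SimpleGraph V) (D : Set V) :
    IsDomSet G D ↔ ∀ w, ∃ d ∈ D, w ∈ closedNbhd G d := by
  simp [IsDomSet, closedNbhdSet]

lemma exists_priv {V : Type*} (G : SimpleGraph V) {D : Set V} (hD : IsMinDomSet G D)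
    {u : V} (hu : u ∈ D) : (privSet G D u).Nonempty := by
  by_contra h
  rw [Set.not_nonempty_iff_eq_empty] at h
  apply hD.2 (D \ {u}) (Set.sdiff_singleton_ssubset.mpr hu)
  rw [dom_iff]
  intro w
  obtain ⟨d, hd, hwd⟩ := (dom_iff G D).mp hD.1 w
  by_cases hcase : ∃ d' ∈ D, d' ≠ u ∧ w ∈ closedNbhd G d'
  · obtain ⟨d', hd', hne, hw⟩ := hcase
    exact ⟨d', ⟨hd', hne⟩, hw⟩
  · push_neg at hcase
    exfalso
    have hw : w ∈ privSet G D u := by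
      have hdu : d = u := by
        by_contra hne
        exact hcase d hd hne hwd
      ext z
      simp only [privSet, Set.mem_inter_iff, Set.mem_singleton_iff]
      constructor
      · rintro ⟨hz1, hz2⟩
        by_contra hne
        exact hcase z hz2 hne ((cn_symm G).mp hz1)
      · rintro rfl
        exact ⟨(cn_symm G).mp (hdu ▸ hwd), hu⟩
    rw [h] at hw
    exact hw

lemma exists_min_subset {V : Type*} [Fintype V] (G : SimpleGraph V) {A : Set V}
    (hA : IsDomSet G A) : ∃ B ⊆ A, IsMinDomSet G B := by
  obtain ⟨B, hB, hmin⟩ := Set.Finite.exists_minimalFor id {B | B ⊆ A ∧ IsDomSet G B}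
    (Set.toFinite _) ⟨A, le_refl _, hA⟩
  refine ⟨B, hB.1, hB.2, ?_⟩
  intro D' hD' hdom
  exact hD'.2 (hmin ⟨hD'.subset.trans hB.1, hdom⟩ hD'.subset)

/-- If `D` is a minimal dominating set of a finite graph `G` and `G[D]` contains at
least one edge, then there is a minimal dominating set `D*` of `G` whose induced edge
set is a proper subset of that of `G[D]`, with some vertex of `D*` isolated in `G[D*]`. -/
theorem stmt6 {V : Type*} [Fintype V] (G : SimpleGraph V)
    (D : Set V) (hD : IsMinDomSet G D)
    (hedge : ∃ x ∈ D, ∃ y ∈ D, G.Adj x y) :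
    ∃ Dstar : Set V, IsMinDomSet G Dstar ∧
      edgesIn G Dstar ⊂ edgesIn G D ∧
      ∃ w ∈ Dstar, ∀ x ∈ Dstar, ¬ G.Adj w x := by
  obtain ⟨u, hu, y, hy, huy⟩ := hedge
  set P := privSet G D u with hP
  -- u is not its own private neighbor
  have hunotP : u ∉ P := by
    intro hmem
    have : y ∈ closedNbhd G u ∩ D := ⟨(mem_cn G).mpr (Or.inr huy), hy⟩
    rw [hmem] at this
    exact G.ne_of_adj huy this.symm
  -- private neighbors are outside D
  have hPD : ∀ v ∈ P, v ∉ D := by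
    intro v hv hvD
    have : v ∈ closedNbhd G v ∩ D := ⟨(mem_cn G).mpr (Or.inl rfl), hvD⟩
    rw [hv] at this
    exact hunotP (this ▸ hv)
  -- private neighbors are not adjacent to any d ∈ D other than u
  have hPadj : ∀ v ∈ P, ∀ d ∈ D, d ≠ u → ¬ G.Adj v d := by
    intro v hv d hd hne hadj
    have : d ∈ closedNbhd G v ∩ D := ⟨(mem_cn G).mpr (Or.inr hadj), hd⟩
    rw [hv] at this
    exact hne this
  have hPne : P.Nonempty := exists_priv G hD hu
  -- maximal independent subset X of P
  obtain ⟨X, hXS, hXmax⟩ := Set.Finite.exists_maximalFor id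
    {X : Set V | X ⊆ P ∧ ∀ a ∈ X, ∀ b ∈ X, ¬ G.Adj a b} (Set.toFinite _)
    ⟨∅, Set.empty_subset _, by simp⟩
  obtain ⟨hXP, hXind⟩ := hXS
  have hXne : X.Nonempty := by
    rcases Set.eq_empty_or_nonempty X with hXe | hne
    · exfalso
      obtain ⟨p, hp⟩ := hPne
      have hsing : ({p} : Set V) ∈ {X : Set V | X ⊆ P ∧ ∀ a ∈ X, ∀ b ∈ X, ¬ G.Adj a b} := by
        refine ⟨Set.singleton_subset_iff.mpr hp, ?_⟩
        intro a ha b hb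
        rw [Set.mem_singleton_iff] at ha hb
        subst ha; subst hb; exact G.loopless.irrefl _
      have h2 : X = {p} := Set.Subset.antisymm (by rw [hXe]; exact Set.empty_subset _) (hXmax hsing (by rw [hXe]; exact Set.empty_subset _))
      rw [hXe] at h2
      exact Set.singleton_ne_empty p h2.symm
    · exact hne
  -- maximality: every vertex of P \ X has a neighbor in X
  have hXdom : ∀ q ∈ P, q ∉ X → ∃ x ∈ X, G.Adj q x := by
    intro q hq hqX
    by_contra hno
    push_neg at hno
    have hins : insert q X ∈ {X : Set V | X ⊆ P ∧ ∀ a ∈ X, ∀ b ∈ X, ¬ G.Adj a b} := by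
      refine ⟨Set.insert_subset hq hXP, ?_⟩
      intro a ha b hb hab
      rw [Set.mem_insert_iff] at ha hb
      rcases ha with ha | ha <;> rcases hb with hb | hb
      · subst ha; subst hb; exact G.loopless.irrefl _ hab
      · subst ha; exact hno b hb hab
      · subst hb; exact hno a ha hab.symm
      · exact hXind a ha b hb hab
    have heq : X = insert q X := Set.Subset.antisymm (Set.subset_insert q X) (hXmax hins (Set.subset_insert q X))
    exact hqX (by rw [heq]; exact Set.mem_insert q X)
  -- the new dominating set
  set A := (D \ {u}) ∪ X with hA
  have hAdom : IsDomSet G A := by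
    rw [dom_iff]
    intro w
    obtain ⟨d, hd, hwd⟩ := (dom_iff G D).mp hD.1 w
    by_cases hcase : ∃ d' ∈ D, d' ≠ u ∧ w ∈ closedNbhd G d'
    · obtain ⟨d', hd', hne, hw⟩ := hcase
      exact ⟨d', Or.inl ⟨hd', hne⟩, hw⟩
    · push_neg at hcase
      have hdu : d = u := by
        by_contra hne; exact hcase d hd hne hwd
      have hwP : w ∈ P := by
        ext z
        simp only [Set.mem_inter_iff, Set.mem_singleton_iff]
        constructor
        · rintro ⟨hz1, hz2⟩
          by_contra hne
          exact hcase z hz2 hne ((cn_symm G).mp hz1)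
        · rintro rfl
          exact ⟨(cn_symm G).mp (hdu ▸ hwd), hu⟩
      by_cases hwX : w ∈ X
      · exact ⟨w, Or.inr hwX, (mem_cn G).mpr (Or.inl rfl)⟩
      · obtain ⟨x, hx, hadj⟩ := hXdom w hwP hwX
        exact ⟨x, Or.inr hx, (mem_cn G).mpr (Or.inr hadj.symm)⟩
  obtain ⟨B, hBA, hBmin⟩ := exists_min_subset G hAdom
  -- u ∉ A
  have huA : u ∉ A := by
    rintro (⟨-, h⟩ | h)
    · exact h rfl
    · exact hunotP (hXP h)
  -- X ⊆ B
  have hXB : X ⊆ B := by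
    intro x hx
    by_contra hxB
    obtain ⟨b, hb, hxb⟩ := (dom_iff G B).mp hBmin.1 x
    rcases (mem_cn G).mp hxb with rfl | hadj
    · exact hxB hb
    · rcases hBA hb with ⟨hbD, hbu⟩ | hbX
      · exact hPadj x (hXP hx) b hbD (fun h => hbu (Set.mem_singleton_iff.mpr h)) hadj.symm
      · exact hXind b hbX x hx hadj
  -- vertices of X have no neighbors in A (hence none in B)
  have hXiso : ∀ x ∈ X, ∀ z ∈ A, ¬ G.Adj x z := by
    intro x hx z hz hadj
    rcases hz with ⟨hzD, hzu⟩ | hzX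
    · exact hPadj x (hXP hx) z hzD (fun h => hzu (Set.mem_singleton_iff.mpr h)) hadj
    · exact hXind x hx z hzX hadj
  obtain ⟨w, hw⟩ := hXne
  refine ⟨B, hBmin, ?_, w, hXB hw, fun z hz => hXiso w hw z (hBA hz)⟩
  constructor
  · -- edgesIn G B ⊆ edgesIn G D
    rintro e ⟨he, hmem⟩
    refine ⟨he, ?_⟩
    induction e with
    | h a b =>
      have hadj : G.Adj a b := he
      have haB : a ∈ B := hmem a (by simp)
      have hbB : b ∈ B := hmem b (by simp)
      have haD : a ∈ D \ {u} := by
        rcases hBA haB with h | h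
        · exact h
        · exact absurd hadj (hXiso a h b (hBA hbB))
      have hbD : b ∈ D \ {u} := by
        rcases hBA hbB with h | h
        · exact h
        · exact absurd hadj.symm (hXiso b h a (hBA haB))
      intro x hx
      rcases Sym2.mem_iff.mp hx with rfl | rfl
      · exact haD.1
      · exact hbD.1
  · -- not superset: edge s(u,y) ∈ edgesIn G D \ edgesIn G B
    intro hsub
    have : s(u, y) ∈ edgesIn G B := hsub ⟨huy, by
      intro x hx
      rcases Sym2.mem_iff.mp hx with rfl | rfl
      · exact hu
      · exact hy⟩
    exact huA (hBA (this.2 u (by simp)))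
end

section
/- Let G be the comparability graph of a finite poset P = (V, ≤). Let D be a minimal dominating set of G, let u ∈ D have a neighbor in D, let v ∈ priv(D, u) with u ≤ v, let X be a maximal independent set of the induced subgraph G[priv(D,u) ∖ N[v]], and set D' = (D ∖ {u}) ∪ X ∪ {v}. Let Z ⊆ D ∖ {u} be such that priv(D', z) = ∅ for every z ∈ Z and such that D* = D' ∖ Z is a minimal dominating set of G. Define R_1 = {x ∈ D* : u ≤ x and x ∈ priv(D*, x)}, B = V ∖ N[(D* ∖ R_1) ∪ {u}], R_2 = ↑B ∖ N[R_1], and R = (R_1 ∖ {v}) ∪ R_2. Then the set (R_1 ∪ Z) ∖ (X ∪ {v}) is a minimal red dominating set of G(R, B), i.e., it is an inclusion-minimal subset of R whose closed neighborhood contains B. -/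
open Set

/-- `D` is a minimal red dominating set of `G(R, B)`: an inclusion-minimal subset of `R`
whose closed neighborhood contains `B`. -/
def IsMinRedDom {V : Type*} (G : SimpleGraph V) (R B D : Set V) : Prop :=
  D ⊆ R ∧ B ⊆ closedNbhdSet G D ∧ ∀ D' ⊂ D, ¬ B ⊆ closedNbhdSet G D'

/-- The comparability graph of a poset: distinct vertices are adjacent iff comparable. -/
def compGraph (V : Type*) [PartialOrder V] : SimpleGraph V :=
  SimpleGraph.fromRel (fun x y => x ≤ y)

section Aux

variable {V : Type*}

lemma mem_cns {G : SimpleGraph V} {S : Set V} {w : V} :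
    w ∈ closedNbhdSet G S ↔ ∃ v ∈ S, w ∈ closedNbhd G v := by
  simp [closedNbhdSet]

lemma mem_cn_comm {G : SimpleGraph V} {x y : V} :
    x ∈ closedNbhd G y ↔ y ∈ closedNbhd G x := by
  simp only [closedNbhd, Set.mem_insert_iff, SimpleGraph.mem_neighborSet]
  constructor
  · rintro (rfl | h)
    · exact Or.inl rfl
    · exact Or.inr h.symm
  · rintro (rfl | h)
    · exact Or.inl rfl
    · exact Or.inr h.symm

lemma adj_iff' [PartialOrder V] {x y : V} :
    (compGraph V).Adj x y ↔ x ≠ y ∧ (x ≤ y ∨ y ≤ x) :=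
  SimpleGraph.fromRel_adj _ x y

lemma mem_cn_s9 [PartialOrder V] {x y : V} :
    x ∈ closedNbhd (compGraph V) y ↔ x ≤ y ∨ y ≤ x := by
  simp only [closedNbhd, Set.mem_insert_iff, SimpleGraph.mem_neighborSet]
  constructor
  · rintro (rfl | h)
    · exact Or.inl le_rfl
    · rcases (adj_iff'.mp h).2 with h' | h'
      · exact Or.inr h'
      · exact Or.inl h'
  · intro h
    by_cases hxy : x = y
    · exact Or.inl hxy
    · exact Or.inr (adj_iff'.mpr ⟨fun h' => hxy h'.symm, by tauto⟩)

lemma priv_nonempty {G : SimpleGraph V} {D : Set V}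
    (h : IsMinDomSet G D) {s : V} (hs : s ∈ D) :
    ∃ p, closedNbhd G p ∩ D = {s} := by
  by_contra hc
  push_neg at hc
  have hss : D \ {s} ⊂ D := ⟨Set.diff_subset, fun hsub => (hsub hs).2 rfl⟩
  refine h.2 (D \ {s}) hss (fun w => ?_)
  rcases Classical.em (∃ d' ∈ D \ {s}, w ∈ closedNbhd G d') with ⟨d', hd', hwd'⟩ | hne
  · exact mem_cns.mpr ⟨d', hd', hwd'⟩
  · exfalso
    apply hc w
    apply Set.Subset.antisymm
    · rintro x ⟨hx1, hx2⟩
      by_contra hxs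
      exact hne ⟨x, ⟨hx2, hxs⟩, mem_cn_comm.mp hx1⟩
    · intro x hx
      have hxs : x = s := hx
      subst hxs
      rcases mem_cns.mp (h.1 w) with ⟨d, hd, hwd⟩
      have hds : d = x := by
        by_contra hds
        exact hne ⟨d, ⟨hd, hds⟩, hwd⟩
      subst hds
      exact ⟨mem_cn_comm.mp hwd, hd⟩

end Aux

/-- In the comparability graph of a finite poset, with the flipping setup
(`D` minimal dominating, `u ∈ D` with a neighbor in `D`, `v ∈ priv(D,u)`, `u ≤ v`,
`X` a maximal independent set of `G[priv(D,u) ∖ N[v]]`, `D' = (D ∖ {u}) ∪ X ∪ {v}`,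
`Z ⊆ D ∖ {u}` consisting of vertices with no private neighbor w.r.t. `D'`, and
`D* = D' ∖ Z` a minimal dominating set), defining
`R₁ = {x ∈ D* : u ≤ x, x ∈ priv(D*,x)}`, `B = V ∖ N[(D* ∖ R₁) ∪ {u}]`,
`R₂ = ↑B ∖ N[R₁]` and `R = (R₁ ∖ {v}) ∪ R₂`, the set `(R₁ ∪ Z) ∖ (X ∪ {v})` is a
minimal red dominating set of `G(R, B)`. -/
theorem stmt9 {V : Type*} [Fintype V] [PartialOrder V]
    (D : Set V) (hD : IsMinDomSet (compGraph V) D)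
    (u : V) (hu : u ∈ D) (hnb : ∃ w ∈ D, (compGraph V).Adj u w)
    (v : V) (hv : v ∈ privSet (compGraph V) D u) (huv : u ≤ v)
    (X : Set V)
    (hX : IsMaxIndepOn (compGraph V)
      (privSet (compGraph V) D u \ closedNbhd (compGraph V) v) X)
    (D' : Set V) (hD' : D' = (D \ {u}) ∪ X ∪ {v})
    (Z : Set V) (hZ : Z ⊆ D \ {u})
    (hZpriv : ∀ z ∈ Z, privSet (compGraph V) D' z = ∅)
    (Dstar : Set V) (hDstar : Dstar = D' \ Z)
    (hmin : IsMinDomSet (compGraph V) Dstar)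
    (R1 B R2 R : Set V)
    (hR1 : R1 = {x ∈ Dstar | u ≤ x ∧ x ∈ privSet (compGraph V) Dstar x})
    (hB : B = univ \ closedNbhdSet (compGraph V) ((Dstar \ R1) ∪ {u}))
    (hR2 : R2 = {w : V | ∃ s ∈ B, s ≤ w} \ closedNbhdSet (compGraph V) R1)
    (hR : R = (R1 \ {v}) ∪ R2) :
    IsMinRedDom (compGraph V) R B ((R1 ∪ Z) \ (X ∪ {v})) := by
  classical
  have hcnv : closedNbhd (compGraph V) v ∩ D = {u} := hv
  have hvu : v ≠ u := by
    rintro rfl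
    obtain ⟨w, hwD, hadj⟩ := hnb
    have hw : w ∈ closedNbhd (compGraph V) v ∩ D := by
      refine ⟨mem_cn_s9.mpr ?_, hwD⟩
      rcases (adj_iff'.mp hadj).2 with h | h
      · exact Or.inr h
      · exact Or.inl h
    rw [hcnv] at hw
    have hw' : w = v := hw
    subst hw'
    exact (compGraph V).loopless.irrefl w hadj
  have hvD : v ∉ D := by
    intro h
    have hvm : v ∈ closedNbhd (compGraph V) v ∩ D := ⟨mem_cn_s9.mpr (Or.inl le_rfl), h⟩
    rw [hcnv] at hvm
    exact hvu hvm
  have hXpriv : ∀ x ∈ X, closedNbhd (compGraph V) x ∩ D = {u} := fun x hx => (hX.1 hx).1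
  have hXnv : ∀ x ∈ X, x ∉ closedNbhd (compGraph V) v := fun x hx => (hX.1 hx).2
  have hXlt : ∀ x ∈ X, u ≤ x ∧ x ≠ u := by
    intro x hx
    have hu_cn : u ∈ closedNbhd (compGraph V) x := by
      have hm : u ∈ ({u} : Set V) := rfl
      rw [← hXpriv x hx] at hm
      exact hm.1
    rcases mem_cn_s9.mp hu_cn with h | h
    · refine ⟨h, ?_⟩
      rintro rfl
      exact hXnv x hx (mem_cn_s9.mpr (Or.inl huv))
    · exact (hXnv x hx (mem_cn_s9.mpr (Or.inl (h.trans huv)))).elim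
  have hXD : ∀ x ∈ X, x ∉ D := by
    intro x hx hxD
    have hm : x ∈ closedNbhd (compGraph V) x ∩ D := ⟨mem_cn_s9.mpr (Or.inl le_rfl), hxD⟩
    rw [hXpriv x hx] at hm
    exact (hXlt x hx).2 hm
  have hD'cases : ∀ d ∈ D', d ∈ D \ {u} ∨ d ∈ X ∨ d = v := by
    intro d hd
    rw [hD'] at hd
    rcases hd with (h | h) | h
    · exact Or.inl h
    · exact Or.inr (Or.inl h)
    · exact Or.inr (Or.inr h)
  have huD' : u ∉ D' := by
    intro h
    rcases hD'cases u h with h' | h' | h'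
    · exact h'.2 rfl
    · exact (hXlt u h').2 rfl
    · exact hvu h'.symm
  have hvD' : v ∈ D' := by
    rw [hD']
    exact Or.inr rfl
  have hvZ : v ∉ Z := fun h => hvD (hZ h).1
  have hXZ : ∀ x ∈ X, x ∉ Z := fun x hx h => hXD x hx (hZ h).1
  have hvDs : v ∈ Dstar := by rw [hDstar]; exact ⟨hvD', hvZ⟩
  have hXDs : ∀ x ∈ X, x ∈ Dstar := by
    intro x hx
    rw [hDstar]
    exact ⟨by rw [hD']; exact Or.inl (Or.inr hx), hXZ x hx⟩
  have hDsD' : ∀ d ∈ Dstar, d ∈ D' := by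
    intro d hd
    rw [hDstar] at hd
    exact hd.1
  have hR1mem : ∀ r, r ∈ R1 ↔
      r ∈ Dstar ∧ u ≤ r ∧ closedNbhd (compGraph V) r ∩ Dstar = {r} := by
    intro r
    rw [hR1]
    exact Iff.rfl
  have hvR1 : v ∈ R1 := by
    rw [hR1mem]
    refine ⟨hvDs, huv, ?_⟩
    apply Set.eq_singleton_iff_unique_mem.mpr
    refine ⟨⟨mem_cn_s9.mpr (Or.inl le_rfl), hvDs⟩, ?_⟩
    rintro d ⟨hdcn, hdDs⟩
    rcases hD'cases d (hDsD' d hdDs) with hd | hd | hd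
    · have hm : d ∈ closedNbhd (compGraph V) v ∩ D := ⟨hdcn, hd.1⟩
      rw [hcnv] at hm
      exact (hd.2 hm).elim
    · exact (hXnv d hd hdcn).elim
    · exact hd
  have hXR1 : ∀ x ∈ X, x ∈ R1 := by
    intro x hx
    rw [hR1mem]
    refine ⟨hXDs x hx, (hXlt x hx).1, ?_⟩
    apply Set.eq_singleton_iff_unique_mem.mpr
    refine ⟨⟨mem_cn_s9.mpr (Or.inl le_rfl), hXDs x hx⟩, ?_⟩
    rintro d ⟨hdcn, hdDs⟩
    rcases hD'cases d (hDsD' d hdDs) with hd | hd | hd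
    · have hm : d ∈ closedNbhd (compGraph V) x ∩ D := ⟨hdcn, hd.1⟩
      rw [hXpriv x hx] at hm
      exact (hd.2 hm).elim
    · by_contra hdx
      rcases mem_cn_s9.mp hdcn with h | h
      · exact hX.2.1 x hx d hd (adj_iff'.mpr ⟨fun he => hdx he.symm, Or.inr h⟩)
      · exact hX.2.1 x hx d hd (adj_iff'.mpr ⟨fun he => hdx he.symm, Or.inl h⟩)
    · subst hd
      exact (hXnv x hx (mem_cn_comm.mp hdcn)).elim
  have hR1D : ∀ r ∈ R1, r ∉ X → r ≠ v → r ∈ D ∧ r ≠ u := by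
    intro r hr hrX hrv
    rcases hD'cases r (hDsD' r ((hR1mem r).mp hr).1) with h | h | h
    · exact ⟨h.1, fun he => h.2 he⟩
    · exact (hrX h).elim
    · exact (hrv h).elim
  have hprivD : ∀ s ∈ D, ∃ p, closedNbhd (compGraph V) p ∩ D = {s} :=
    fun s hs => priv_nonempty hD hs
  have hBmem : ∀ b, b ∈ B ↔
      ∀ d ∈ (Dstar \ R1) ∪ {u}, b ∉ closedNbhd (compGraph V) d := by
    intro b
    rw [hB]
    constructor
    · rintro ⟨-, hb⟩ d hd hcn
      exact hb (mem_cns.mpr ⟨d, hd, hcn⟩)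
    · intro h
      refine ⟨trivial, fun hc => ?_⟩
      obtain ⟨d, hd, hcn⟩ := mem_cns.mp hc
      exact h d hd hcn
  have hBu : ∀ b ∈ B, b ∉ closedNbhd (compGraph V) u :=
    fun b hb => (hBmem b).mp hb u (Or.inr rfl)
  have hPB : ∀ s, s ∈ D → s ≠ u → (s ∈ R1 ∨ s ∉ Dstar) →
      ∀ p, closedNbhd (compGraph V) p ∩ D = {s} → p ∈ B := by
    intro s hsD hsu hsR p hp
    refine (hBmem p).mpr ?_
    intro d hd hcn
    have hdp : d ∈ closedNbhd (compGraph V) p := mem_cn_comm.mp hcn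
    rcases hd with ⟨hdDs, hdR1⟩ | hdu
    · rcases hD'cases d (hDsD' d hdDs) with hd' | hd' | hd'
      · have hm : d ∈ closedNbhd (compGraph V) p ∩ D := ⟨hdp, hd'.1⟩
        rw [hp] at hm
        have hds : d = s := hm
        subst hds
        rcases hsR with h | h
        · exact hdR1 h
        · exact h hdDs
      · exact hdR1 (hXR1 d hd')
      · subst hd'
        exact hdR1 hvR1
    · have hdu' : d = u := hdu
      subst hdu'
      have hm : d ∈ closedNbhd (compGraph V) p ∩ D := ⟨hdp, hu⟩
      rw [hp] at hm
      exact hsu hm.symm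
  have hF5 : ∀ b ∈ B, ∀ r ∈ R1, b ∈ closedNbhd (compGraph V) r → b ≤ r ∧ b ≠ r := by
    intro b hb r hr hbr
    have hur := ((hR1mem r).mp hr).2.1
    have hbu := hBu b hb
    rcases mem_cn_s9.mp hbr with h | h
    · refine ⟨h, ?_⟩
      rintro rfl
      exact hbu (mem_cn_s9.mpr (Or.inr hur))
    · exact (hbu (mem_cn_s9.mpr (Or.inr (hur.trans h)))).elim
  have hSsub : ∀ s, s ∈ (R1 ∪ Z) \ (X ∪ {v}) →
      s ∈ D ∧ s ≠ u ∧ (s ∈ R1 ∨ s ∉ Dstar) := by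
    rintro s ⟨hs, hsn⟩
    have hsX : s ∉ X := fun h => hsn (Or.inl h)
    have hsv : s ≠ v := fun h => hsn (Or.inr h)
    rcases hs with hs | hs
    · obtain ⟨h1, h2⟩ := hR1D s hs hsX hsv
      exact ⟨h1, h2, Or.inl hs⟩
    · refine ⟨(hZ hs).1, fun h => (hZ hs).2 h, Or.inr ?_⟩
      intro hc
      rw [hDstar] at hc
      exact hc.2 hs
  refine ⟨?_, ?_, ?_⟩
  · -- S ⊆ R
    rintro s ⟨hsRZ, hsn⟩
    have hsX : s ∉ X := fun h => hsn (Or.inl h)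
    have hsv : s ≠ v := fun h => hsn (Or.inr h)
    rw [hR]
    rcases hsRZ with hsR1 | hsZ
    · exact Or.inl ⟨hsR1, hsv⟩
    · right
      rw [hR2]
      have hsD := hZ hsZ
      have hsDs : s ∉ Dstar := by
        intro hc
        rw [hDstar] at hc
        exact hc.2 hsZ
      obtain ⟨p, hp⟩ := hprivD s hsD.1
      have hpB : p ∈ B := hPB s hsD.1 (fun h => hsD.2 h) (Or.inr hsDs) p hp
      have hscn : s ∈ closedNbhd (compGraph V) p := by
        have hm : s ∈ ({s} : Set V) := rfl
        rw [← hp] at hm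
        exact hm.1
      have hps : p ≤ s := by
        rcases mem_cn_s9.mp hscn with h | h
        · by_cases hps' : p ≤ s
          · exact hps'
          · exfalso
            have hpnp : closedNbhd (compGraph V) p ∩ D' ≠ {s} := by
              intro hc
              have hm : p ∈ privSet (compGraph V) D' s := hc
              rw [hZpriv s hsZ] at hm
              exact hm
            have hsub : ({s} : Set V) ⊆ closedNbhd (compGraph V) p ∩ D' := by
              refine Set.singleton_subset_iff.mpr ⟨hscn, ?_⟩
              rw [hD']
              exact Or.inl (Or.inl hsD)
            obtain ⟨y, hy, hys⟩ :
                ∃ y ∈ closedNbhd (compGraph V) p ∩ D', y ≠ s := by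
              by_contra hcc
              push_neg at hcc
              exact hpnp (Set.Subset.antisymm (fun x hx => hcc x hx) hsub)
            rcases hD'cases y hy.2 with hy' | hy' | hy'
            · have hm : y ∈ closedNbhd (compGraph V) p ∩ D := ⟨hy.1, hy'.1⟩
              rw [hp] at hm
              exact hys hm
            · have hyR1 := hXR1 y hy'
              have hpy := hF5 p hpB y hyR1 (mem_cn_comm.mp hy.1)
              have hsy : s ∈ closedNbhd (compGraph V) y :=
                mem_cn_s9.mpr (Or.inl (h.trans hpy.1))
              have hm : s ∈ closedNbhd (compGraph V) y ∩ D := ⟨hsy, hsD.1⟩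
              rw [hXpriv y hy'] at hm
              exact hsD.2 hm
            · subst hy'
              have hpy := hF5 p hpB y hvR1 (mem_cn_comm.mp hy.1)
              have hsy : s ∈ closedNbhd (compGraph V) y :=
                mem_cn_s9.mpr (Or.inl (h.trans hpy.1))
              have hm : s ∈ closedNbhd (compGraph V) y ∩ D := ⟨hsy, hsD.1⟩
              rw [hcnv] at hm
              exact hsD.2 hm
        · exact h
      refine ⟨⟨p, hpB, hps⟩, ?_⟩
      intro hc
      obtain ⟨r, hrR1, hscnr⟩ := mem_cns.mp hc
      have hrDs := ((hR1mem r).mp hrR1).1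
      have hur := ((hR1mem r).mp hrR1).2.1
      rcases hD'cases r (hDsD' r hrDs) with hr' | hr' | hr'
      · rcases mem_cn_s9.mp hscnr with h | h
        · have hm : r ∈ closedNbhd (compGraph V) p ∩ D :=
            ⟨mem_cn_s9.mpr (Or.inr (hps.trans h)), hr'.1⟩
          rw [hp] at hm
          have hrs : r = s := hm
          subst hrs
          exact hsDs hrDs
        · obtain ⟨q, hq⟩ := hprivD r hr'.1
          have hrq : r ∈ closedNbhd (compGraph V) q := by
            have hm : r ∈ ({r} : Set V) := rfl
            rw [← hq] at hm
            exact hm.1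
          rcases mem_cn_s9.mp hrq with h2 | h2
          · have hm : u ∈ closedNbhd (compGraph V) q ∩ D :=
              ⟨mem_cn_s9.mpr (Or.inl (hur.trans h2)), hu⟩
            rw [hq] at hm
            exact hr'.2 hm.symm
          · have hm : s ∈ closedNbhd (compGraph V) q ∩ D :=
              ⟨mem_cn_s9.mpr (Or.inr (h2.trans h)), hsD.1⟩
            rw [hq] at hm
            have hsr : s = r := hm
            subst hsr
            exact hsDs hrDs
      · have hm : s ∈ closedNbhd (compGraph V) r ∩ D := ⟨hscnr, hsD.1⟩
        rw [hXpriv r hr'] at hm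
        exact hsD.2 hm
      · subst hr'
        have hm : s ∈ closedNbhd (compGraph V) r ∩ D := ⟨hscnr, hsD.1⟩
        rw [hcnv] at hm
        exact hsD.2 hm
  · -- B ⊆ N[S]
    intro b hb
    obtain ⟨d, hdD, hbd⟩ := mem_cns.mp (hD.1 b)
    have hbu := hBu b hb
    have hdu : d ≠ u := by
      rintro rfl
      exact hbu hbd
    have hdXv : d ∉ X ∪ {v} := by
      rintro (h | h)
      · exact hXD d h hdD
      · have hdv : d = v := h
        subst hdv
        exact hvD hdD
    refine mem_cns.mpr ?_
    by_cases hdZ : d ∈ Z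
    · exact ⟨d, ⟨Or.inr hdZ, hdXv⟩, hbd⟩
    · have hdD' : d ∈ D' := by
        rw [hD']
        exact Or.inl (Or.inl ⟨hdD, hdu⟩)
      have hdDs : d ∈ Dstar := by
        rw [hDstar]
        exact ⟨hdD', hdZ⟩
      have hdR1 : d ∈ R1 := by
        by_contra hc
        exact (hBmem b).mp hb d (Or.inl ⟨hdDs, hc⟩) hbd
      exact ⟨d, ⟨Or.inl hdR1, hdXv⟩, hbd⟩
  · -- minimality
    intro S' hS'sub hcov
    obtain ⟨s, hsS, hsS'⟩ := Set.exists_of_ssubset hS'sub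
    obtain ⟨hsD, hsu, hsR⟩ := hSsub s hsS
    obtain ⟨p, hp⟩ := hprivD s hsD
    have hpB : p ∈ B := hPB s hsD hsu hsR p hp
    obtain ⟨s', hs'S', hps'⟩ := mem_cns.mp (hcov hpB)
    have hs'S := hS'sub.1 hs'S'
    have hs'D : s' ∈ D := (hSsub s' hs'S).1
    have hm : s' ∈ closedNbhd (compGraph V) p ∩ D := ⟨mem_cn_comm.mp hps', hs'D⟩
    rw [hp] at hm
    have hss : s' = s := hm
    subst hss
    exact hsS' hs'S'
end
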